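/- Let T be a finite index set, let K ≥ 1 be a natural number, and for each t ∈ T let k t be a natural number with 1 ≤ k t ≤ K and let q t : Fin (k t) → ℝ satisfy q t f > 0 for all f. Define p t = ∑ f, q t f for each t, and assume ∑ t, p t = 1. Then ∑ t, ∑ f, (q t f) * logb 2 (1 / q t f) ≤ (∑ t, p t * logb 2 (1 / p t)) + logb 2 K. -/

import Mathlib

open Real

private lemma cell_bound {n : ℕ} (hn : 1 ≤ n) (K : ℕ) (hkK : n ≤ K)
    (q : Fin n → ℝ) (hq : ∀ f, 0 < q f) :
    ∑ f, q f * Real.log (1 / q f) ≤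
      (∑ f, q f) * Real.log (1 / ∑ f, q f) + (∑ f, q f) * Real.log K := by
  set p : ℝ := ∑ f, q f with hp
  have hppos : 0 < p := Finset.sum_pos (fun f _ => hq f) ⟨⟨0, hn⟩, Finset.mem_univ _⟩
  have jensen : ∑ f, (q f / p) * Real.log (p / q f) ≤ Real.log n := by
    have h := (strictConcaveOn_log_Ioi.concaveOn).le_map_sum
      (t := Finset.univ) (w := fun f : Fin n => q f / p) (p := fun f : Fin n => p / q f)
      (fun f _ => (div_pos (hq f) hppos).le)
      (by rw [← Finset.sum_div]; exact div_self hppos.ne')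
      (fun f _ => Set.mem_Ioi.2 (div_pos hppos (hq f)))
    simp only [smul_eq_mul] at h
    have hsum1 : ∑ f : Fin n, (q f / p) * (p / q f) = (n : ℝ) := by
      rw [Finset.sum_congr rfl fun f _ =>
        (by rw [div_mul_div_comm, mul_comm, div_self (mul_ne_zero hppos.ne' (hq f).ne')] :
          (q f / p) * (p / q f) = 1)]
      simp
    rwa [hsum1] at h
  have key : ∑ f, q f * Real.log (p / q f) ≤ p * Real.log n := by
    have := mul_le_mul_of_nonneg_left jensen hppos.le
    rw [Finset.mul_sum] at this
    refine le_trans (le_of_eq ?_) this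
    refine Finset.sum_congr rfl fun f _ => ?_
    field_simp
  have hlogn : Real.log n ≤ Real.log K :=
    Real.log_le_log (by exact_mod_cast hn) (by exact_mod_cast hkK)
  have key2 : ∑ f, q f * Real.log (p / q f) ≤ p * Real.log K :=
    key.trans (mul_le_mul_of_nonneg_left hlogn hppos.le)
  have expand : ∀ f, q f * Real.log (1 / q f)
      = q f * Real.log (p / q f) - q f * Real.log p := fun f => by
    rw [Real.log_div hppos.ne' (hq f).ne', one_div, Real.log_inv]; ring
  calc ∑ f, q f * Real.log (1 / q f)
      = (∑ f, q f * Real.log (p / q f)) - p * Real.log p := by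
        rw [Finset.sum_congr rfl fun f _ => expand f, Finset.sum_sub_distrib,
          ← Finset.sum_mul]
    _ ≤ p * Real.log (1 / p) + p * Real.log K := by
        rw [one_div, Real.log_inv]; linarith

theorem entropy_fragmentation {T : Type*} [Fintype T] (K : ℕ) (hK : 1 ≤ K)
    (k : T → ℕ) (hk1 : ∀ t, 1 ≤ k t) (hkK : ∀ t, k t ≤ K)
    (q : ∀ t, Fin (k t) → ℝ) (hq : ∀ t f, 0 < q t f)
    (hsum : ∑ t, ∑ f, q t f = 1) :
    ∑ t, ∑ f, q t f * Real.logb 2 (1 / q t f) ≤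
      (∑ t, (∑ f, q t f) * Real.logb 2 (1 / (∑ f, q t f))) + Real.logb 2 K := by
  have hlog2 : 0 < Real.log 2 := Real.log_pos one_lt_two
  simp only [Real.logb, ← mul_div_assoc, ← Finset.sum_div]
  rw [← add_div, div_le_div_iff_of_pos_right hlog2]
  calc ∑ t, ∑ f, q t f * Real.log (1 / q t f)
      ≤ ∑ t, ((∑ f, q t f) * Real.log (1 / ∑ f, q t f)
          + (∑ f, q t f) * Real.log K) :=
        Finset.sum_le_sum fun t _ => cell_bound (hk1 t) K (hkK t) (q t) (hq t)
    _ = (∑ t, (∑ f, q t f) * Real.log (1 / ∑ f, q t f)) + Real.log K := by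
        rw [Finset.sum_add_distrib, ← Finset.sum_mul, hsum, one_mul]
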